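/- Let A be an n×n complex Hermitian matrix whose eigenvalues (with multiplicity) satisfy λ_{r+1} = λ_{r+2} = … = λ_n = λ, while λ_1, …, λ_r are pairwise distinct and all different from λ. Partition A = [[A₁, B],[B*, A₂]] with A₁ of size r×r and A₂ of size (n−r)×(n−r). Let δ' > 0 and suppose that A₁ − λI is invertible with ‖(A₁ − λI)^{−1}‖_op < 1/δ', where ‖·‖_op is the operator (spectral) norm. Then ‖A₂ − λI‖_op ≤ ‖B‖_op²/δ'. -/

import Mathlib

open Matrix

noncomputable section

/-- The `ℓ²`-operator (spectral) norm of a rectangular complex matrix. -/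
def opNorm {m n : Type*} [Fintype m] [Fintype n] [DecidableEq n]
    (A : Matrix m n ℂ) : ℝ :=
  ‖LinearMap.toContinuousLinearMap (Matrix.toEuclideanLin A)‖

open scoped Matrix.Norms.L2Operator in
lemma opNorm_eq_l2 {m n : Type*} [Fintype m] [Fintype n] [DecidableEq n]
    (A : Matrix m n ℂ) : opNorm A = ‖A‖ := rfl

open scoped Matrix.Norms.L2Operator in
lemma aux_norm_bound {r s : ℕ} (B : Matrix (Fin r) (Fin s) ℂ) (C : Matrix (Fin r) (Fin r) ℂ)
    (δ' : ℝ) (hδ' : 0 < δ') (hC : opNorm C < 1 / δ') :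
    opNorm (Bᴴ * (C * B)) ≤ opNorm B ^ 2 / δ' := by
  rw [opNorm_eq_l2, opNorm_eq_l2]
  rw [opNorm_eq_l2] at hC
  have hBn : (0:ℝ) ≤ ‖B‖ := norm_nonneg _
  calc ‖Bᴴ * (C * B)‖ ≤ ‖Bᴴ‖ * ‖C * B‖ := Matrix.l2_opNorm_mul _ _
  _ ≤ ‖Bᴴ‖ * (‖C‖ * ‖B‖) :=
      mul_le_mul_of_nonneg_left (Matrix.l2_opNorm_mul _ _) (norm_nonneg _)
  _ = ‖B‖ * (‖C‖ * ‖B‖) := by rw [Matrix.l2_opNorm_conjTranspose]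
  _ ≤ ‖B‖ * ((1 / δ') * ‖B‖) :=
      mul_le_mul_of_nonneg_left (mul_le_mul_of_nonneg_right hC.le hBn) hBn
  _ = ‖B‖ ^ 2 / δ' := by ring

/-- Parlett, Theorem 9.5.1: block-diagonal-dominance estimate for a
Hermitian matrix whose trailing eigenvalues all equal `λ`. -/
theorem parlett_block_estimate
    {r s : ℕ} (A : Matrix (Fin r ⊕ Fin s) (Fin r ⊕ Fin s) ℂ) (hA : A.IsHermitian)
    (lam : Fin r ⊕ Fin s → ℝ) (lam0 : ℝ)
    (hspec : ∃ U ∈ Matrix.unitaryGroup (Fin r ⊕ Fin s) ℂ,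
      A = U * Matrix.diagonal (fun i => (lam i : ℂ)) * Uᴴ)
    (htail : ∀ j : Fin s, lam (Sum.inr j) = lam0)
    (hinj : Function.Injective fun i : Fin r => lam (Sum.inl i))
    (hne : ∀ i : Fin r, lam (Sum.inl i) ≠ lam0)
    (δ' : ℝ) (hδ' : 0 < δ')
    (hunit : IsUnit (A.toBlocks₁₁ - (lam0 : ℂ) • 1))
    (hnorm : opNorm (A.toBlocks₁₁ - (lam0 : ℂ) • 1)⁻¹ < 1 / δ') :
    opNorm (A.toBlocks₂₂ - (lam0 : ℂ) • 1) ≤ opNorm A.toBlocks₁₂ ^ 2 / δ' := by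
  classical
  obtain ⟨U, hU, hAeq⟩ := hspec
  have hUl : Uᴴ * U = 1 := by
    have := hU.1
    rwa [Matrix.star_eq_conjTranspose] at this
  -- notation
  set M : Matrix (Fin r ⊕ Fin s) (Fin r ⊕ Fin s) ℂ := A - (lam0 : ℂ) • 1 with hMdef
  set M₁₁ : Matrix (Fin r) (Fin r) ℂ := A.toBlocks₁₁ - (lam0 : ℂ) • 1 with hM11
  set M₂₂ : Matrix (Fin s) (Fin s) ℂ := A.toBlocks₂₂ - (lam0 : ℂ) • 1 with hM22
  set B : Matrix (Fin r) (Fin s) ℂ := A.toBlocks₁₂ with hB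
  -- A.toBlocks₂₁ = Bᴴ
  have hB21 : A.toBlocks₂₁ = Bᴴ := by
    ext i j
    have := congrFun (congrFun (hA : Aᴴ = A) (Sum.inr i)) (Sum.inl j)
    simpa [hB, Matrix.toBlocks₂₁, Matrix.toBlocks₁₂, Matrix.conjTranspose_apply] using this.symm
  have hM : M = Matrix.fromBlocks M₁₁ B Bᴴ M₂₂ := by
    ext i j
    rcases i with i | i <;> rcases j with j | j <;>
      simp [hMdef, hM11, hM22, hB, ← hB21, Matrix.fromBlocks, Matrix.toBlocks₁₁,
        Matrix.toBlocks₁₂, Matrix.toBlocks₂₁, Matrix.toBlocks₂₂, Matrix.one_apply,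
        Sum.inl.injEq, Sum.inr.injEq]
    exact (hA.apply _ _).symm
  -- the last s columns of U
  set V : Matrix (Fin r ⊕ Fin s) (Fin s) ℂ := U.submatrix id Sum.inr with hV
  have hMV : M * V = 0 := by
    have hAU : A * U = U * Matrix.diagonal (fun i => (lam i : ℂ)) := by
      rw [hAeq, Matrix.mul_assoc, Matrix.mul_assoc, hUl, Matrix.mul_one]
    ext i j
    have : (M * U) i (Sum.inr j) = 0 := by
      have : M * U = U * Matrix.diagonal (fun i => (lam i : ℂ)) - (lam0 : ℂ) • U := by
        rw [hMdef, Matrix.sub_mul, hAU, Matrix.smul_mul, Matrix.one_mul]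
      rw [this]
      simp [Matrix.mul_diagonal, htail j]
      ring
    simpa [Matrix.mul_apply, hV, Matrix.submatrix_apply] using this
  have hVV : Vᴴ * V = 1 := by
    ext j j'
    have := congrFun (congrFun hUl (Sum.inr j)) (Sum.inr j')
    simpa [Matrix.mul_apply, hV, Matrix.one_apply, Matrix.conjTranspose_apply,
      Sum.inr.injEq] using this
  set V₁ : Matrix (Fin r) (Fin s) ℂ := V.toRows₁ with hV1
  set V₂ : Matrix (Fin s) (Fin s) ℂ := V.toRows₂ with hV2
  have hVrows : V = Matrix.fromRows V₁ V₂ := (Matrix.fromRows_toRows V).symm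
  have hblocks : Matrix.fromRows (M₁₁ * V₁ + B * V₂) (Bᴴ * V₁ + M₂₂ * V₂) = 0 := by
    rw [← Matrix.fromBlocks_mul_fromRows, ← hVrows, ← hM, hMV]
  have h1 : M₁₁ * V₁ + B * V₂ = 0 := by
    have := congrArg Matrix.toRows₁ hblocks
    simpa [Matrix.toRows₁_fromRows] using this.trans (show Matrix.toRows₁ (0 : Matrix (Fin r ⊕ Fin s) (Fin s) ℂ) = 0 from by ext; rfl)
  have h2 : Bᴴ * V₁ + M₂₂ * V₂ = 0 := by
    have := congrArg Matrix.toRows₂ hblocks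
    simpa [Matrix.toRows₂_fromRows] using this.trans (show Matrix.toRows₂ (0 : Matrix (Fin r ⊕ Fin s) (Fin s) ℂ) = 0 from by ext; rfl)
  -- invert M₁₁
  have hdet : IsUnit M₁₁.det := (Matrix.isUnit_iff_isUnit_det M₁₁).mp hunit
  have hinvmul : M₁₁⁻¹ * M₁₁ = 1 := Matrix.nonsing_inv_mul M₁₁ hdet
  have hV1eq : V₁ = -(M₁₁⁻¹ * (B * V₂)) := by
    have : M₁₁ * V₁ = -(B * V₂) := by
      rw [← add_eq_zero_iff_eq_neg.mp h1]
    calc V₁ = (M₁₁⁻¹ * M₁₁) * V₁ := by rw [hinvmul, Matrix.one_mul]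
    _ = M₁₁⁻¹ * (M₁₁ * V₁) := by rw [Matrix.mul_assoc]
    _ = -(M₁₁⁻¹ * (B * V₂)) := by rw [this, Matrix.mul_neg]
  -- Schur complement kills V₂
  have hSV : (M₂₂ - Bᴴ * M₁₁⁻¹ * B) * V₂ = 0 := by
    have h2' : M₂₂ * V₂ = Bᴴ * (M₁₁⁻¹ * (B * V₂)) := by
      have h := add_eq_zero_iff_eq_neg.mp h2
      rw [hV1eq, Matrix.mul_neg] at h
      exact (neg_injective h).symm
    rw [Matrix.sub_mul, h2', sub_eq_zero, Matrix.mul_assoc Bᴴ M₁₁⁻¹ B,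
      Matrix.mul_assoc Bᴴ (M₁₁⁻¹ * B) V₂, Matrix.mul_assoc M₁₁⁻¹ B V₂]
  -- V₂ is invertible
  have hV2unit : IsUnit V₂ := by
    rw [← Matrix.mulVec_injective_iff_isUnit]
    intro x y hxy
    have hz : V₂ *ᵥ (x - y) = 0 := by
      rw [Matrix.mulVec_sub, hxy, sub_self]
    have hz1 : V₁ *ᵥ (x - y) = 0 := by
      rw [hV1eq]
      simp [Matrix.neg_mulVec, ← Matrix.mulVec_mulVec, hz]
    have hVz : V *ᵥ (x - y) = 0 := by
      rw [hVrows, Matrix.fromRows_mulVec, hz, hz1]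
      ext (i | i) <;> rfl
    have : x - y = 0 := by
      have := congrArg (fun w => Vᴴ *ᵥ w) hVz
      simpa [Matrix.mulVec_mulVec, hVV] using this
    exact sub_eq_zero.mp this
  have hV2det : IsUnit V₂.det := (Matrix.isUnit_iff_isUnit_det V₂).mp hV2unit
  have hS0 : M₂₂ - Bᴴ * M₁₁⁻¹ * B = 0 := by
    calc M₂₂ - Bᴴ * M₁₁⁻¹ * B
        = ((M₂₂ - Bᴴ * M₁₁⁻¹ * B) * V₂) * V₂⁻¹ := by
          rw [Matrix.mul_assoc (M₂₂ - Bᴴ * M₁₁⁻¹ * B) V₂ V₂⁻¹,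
            Matrix.mul_nonsing_inv V₂ hV2det, Matrix.mul_one]
    _ = 0 := by rw [hSV, Matrix.zero_mul]
  have hM22eq : M₂₂ = Bᴴ * (M₁₁⁻¹ * B) := by
    have := sub_eq_zero.mp hS0
    rw [this, Matrix.mul_assoc]
  rw [hM22eq]
  exact aux_norm_bound B M₁₁⁻¹ δ' hδ' hnorm

end
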